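/- Let J be a monomial ideal of Borel type in S = k[x_1,...,x_n], and set Φ_r(J) = J : (x_{r+1}···x_n)^∞. If J has minimal monomial generators u_1,...,u_m, then Φ_r(J) is generated by the monomials Φ_r(u_1),...,Φ_r(u_m), where Φ_r(u) is the monomial obtained from u by deleting all factors x_{r+1},...,x_n. -/

import Mathlib

open MvPolynomial Finsupp Module

namespace Paper

variable {k : Type*} [Field k] {n : ℕ}

/-- `J` is a monomial ideal: generated by a set of monomials. -/
def IsMonomialIdeal (J : Ideal (MvPolynomial (Fin n) k)) : Prop :=
  ∃ G : Set (Fin n →₀ ℕ),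
    J = Ideal.span ((fun d => (monomial d (1:k) : MvPolynomial (Fin n) k)) '' G)

/-- The Borel-type condition: for `i < j` and a monomial `x^d ∈ J` with `x_j ∣ x^d`,
some `x_i^s · x^d / x_j` lies in `J`. -/
def BorelCond (J : Ideal (MvPolynomial (Fin n) k)) : Prop :=
  ∀ i j : Fin n, i < j → ∀ d : Fin n →₀ ℕ,
    (monomial d (1:k) : MvPolynomial (Fin n) k) ∈ J → d j ≠ 0 →
    ∃ s : ℕ,
      (monomial (d + Finsupp.single i s - Finsupp.single j 1) (1:k) :
        MvPolynomial (Fin n) k) ∈ J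

/-- `J` is a monomial ideal of Borel type. -/
def IsBorelType (J : Ideal (MvPolynomial (Fin n) k)) : Prop :=
  IsMonomialIdeal J ∧ BorelCond J

/-- The saturation `J : I^∞`. -/
noncomputable def sat (J I : Ideal (MvPolynomial (Fin n) k)) : Ideal (MvPolynomial (Fin n) k) :=
  ⨆ m : ℕ, Submodule.colon J ((I ^ m) : Ideal (MvPolynomial (Fin n) k))

/-- The product of the variables with (0-based) index `≥ r`, i.e. `x_{r+1} ⋯ x_n`. -/
noncomputable def tailProd (k : Type*) [Field k] (n r : ℕ) : MvPolynomial (Fin n) k :=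
  ∏ i ∈ Finset.univ.filter (fun i : Fin n => r ≤ (i : ℕ)), X i

/-- `Φ_r(J) = J : (x_{r+1} ⋯ x_n)^∞`. -/
noncomputable def Phi (r : ℕ) (J : Ideal (MvPolynomial (Fin n) k)) :
    Ideal (MvPolynomial (Fin n) k) :=
  sat J (Ideal.span {tailProd k n r})

/-- The projection `Π_r : k[x_1,…,x_n] → k[x_1,…,x_r]` sending `x_{r+1},…,x_n` to `0`. -/
noncomputable def projDown (k : Type*) [Field k] (n r : ℕ) :
    MvPolynomial (Fin n) k →ₐ[k] MvPolynomial (Fin r) k :=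
  aeval (fun i : Fin n => if h : (i : ℕ) < r then X ⟨i, h⟩ else 0)

/-- `Π_r(J)`, the image ideal of `J` in `k[x_1,…,x_r]`. -/
noncomputable def PiIdeal (r : ℕ) (J : Ideal (MvPolynomial (Fin n) k)) :
    Ideal (MvPolynomial (Fin r) k) :=
  J.map (projDown k n r).toRingHom

/-- The exponent `d` is a minimal generator of the monomial ideal `J`. -/
def IsMinGen (J : Ideal (MvPolynomial (Fin n) k)) (d : Fin n →₀ ℕ) : Prop :=
  (monomial d (1:k) : MvPolynomial (Fin n) k) ∈ J ∧
    ∀ d' : Fin n →₀ ℕ, d' ≤ d →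
      (monomial d' (1:k) : MvPolynomial (Fin n) k) ∈ J → d' = d

/-- The leading exponent of a polynomial with respect to a monomial order. -/
noncomputable def leadExp (m : MonomialOrder (Fin n)) (f : MvPolynomial (Fin n) k) :
    Fin n →₀ ℕ :=
  m.toSyn.symm (f.support.sup fun d => m.toSyn d)

/-- The initial ideal of `P` with respect to the monomial order `m`. -/
noncomputable def initialIdeal (m : MonomialOrder (Fin n)) (P : Ideal (MvPolynomial (Fin n) k)) :
    Ideal (MvPolynomial (Fin n) k) :=
  Ideal.span {g | ∃ f ∈ P, f ≠ 0 ∧ g = (monomial (leadExp m f) (1:k) : MvPolynomial (Fin n) k)}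

/-- A homogeneous ideal: closed under taking homogeneous components. -/
def IsHomogIdeal (P : Ideal (MvPolynomial (Fin n) k)) : Prop :=
  ∀ f ∈ P, ∀ i : ℕ, homogeneousComponent i f ∈ P

/-- The ideal generated by the variables `x_1, …, x_{i+1}` (0-based indices `≤ i`). -/
noncomputable def varIdealLe (k : Type*) [Field k] {n : ℕ} (i : Fin n) :
    Ideal (MvPolynomial (Fin n) k) :=
  Ideal.span ((fun j : Fin n => (X j : MvPolynomial (Fin n) k)) '' {j | j ≤ i})

/-- The Hilbert series of `S/I` as a power series with integer coefficients. -/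
noncomputable def hilb {N : ℕ} (I : Ideal (MvPolynomial (Fin N) k)) : PowerSeries ℤ :=
  PowerSeries.mk fun i =>
    (Module.finrank k (Submodule.map (Ideal.Quotient.mkₐ k I).toLinearMap
      (homogeneousSubmodule (Fin N) k i)) : ℤ)

/-- The `i`-th Hilbert coefficient read off from the numerator polynomial `q`:
the coefficient of `(t-1)^i` in `q`. -/
noncomputable def hc (q : Polynomial ℤ) (i : ℕ) : ℤ :=
  (Polynomial.taylor 1 q).coeff i

/-- The Krull dimension of the quotient ring `S/I`. -/
noncomputable def qdim {N : ℕ} (I : Ideal (MvPolynomial (Fin N) k)) : WithBot (WithTop ℕ) :=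
  ringKrullDim (MvPolynomial (Fin N) k ⧸ I)

/-- The embedding `k[x_1,…,x_r] → k[x_1,…,x_n]`. -/
noncomputable def inclUp (k : Type*) [Field k] {r n : ℕ} (h : r ≤ n) :
    MvPolynomial (Fin r) k →ₐ[k] MvPolynomial (Fin n) k :=
  rename (Fin.castLE h)

/-- The embedding of variables for the tail subring `k[x_{r+1},…,x_n]`. -/
def tailEmb (n r : ℕ) (h : r ≤ n) : Fin (n - r) → Fin n :=
  fun j => ⟨r + j.1, by omega⟩

/-- The inclusion `k[x_{r+1},…,x_n] → k[x_1,…,x_n]` as a ring hom. -/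
noncomputable def tailIncl (k : Type*) [Field k] {n : ℕ} (r : ℕ) (h : r ≤ n) :
    MvPolynomial (Fin (n - r)) k →+* MvPolynomial (Fin n) k :=
  (rename (tailEmb n r h)).toRingHom

/-- `J₁ = (J ∩ k[x_1,…,x_r])S`: the ideal generated by the monomials of `J`
lying in `k[x_1,…,x_r]`. -/
noncomputable def Jone (r : ℕ) (J : Ideal (MvPolynomial (Fin n) k)) :
    Ideal (MvPolynomial (Fin n) k) :=
  Ideal.span {g | ∃ d : Fin n →₀ ℕ, (∀ i : Fin n, r ≤ (i : ℕ) → d i = 0) ∧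
    (monomial d (1:k) : MvPolynomial (Fin n) k) ∈ J ∧
    g = (monomial d (1:k) : MvPolynomial (Fin n) k)}

/-- The quotient module `J₂/J₁` for ideals `J₁ ≤ J₂`. -/
abbrev quotMod (J₁ J₂ : Ideal (MvPolynomial (Fin n) k)) :=
  (J₂ : Submodule (MvPolynomial (Fin n) k) (MvPolynomial (Fin n) k)) ⧸
    (Submodule.comap
      (J₂ : Submodule (MvPolynomial (Fin n) k) (MvPolynomial (Fin n) k)).subtype
      (J₁ : Submodule (MvPolynomial (Fin n) k) (MvPolynomial (Fin n) k)))

/-- `J₂/J₁` as a module over `k[x_{r+1},…,x_n]`. -/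
noncomputable def quotModTail (r : ℕ) (h : r ≤ n) (J₁ J₂ : Ideal (MvPolynomial (Fin n) k)) :
    Module (MvPolynomial (Fin (n - r)) k) (quotMod J₁ J₂) :=
  Module.compHom _ (tailIncl k r h)

/-- The degrevlex property of a monomial order: compare total degrees first, and break
ties by the *last* variable in which the exponents differ, where *larger* exponent
means *smaller* monomial. -/
def IsDegRevLex (m : MonomialOrder (Fin n)) : Prop :=
  ∀ a b : Fin n →₀ ℕ, (m.toSyn a < m.toSyn b) ↔
    ((a.sum fun _ e => e) < (b.sum fun _ e => e) ∨
      ((a.sum fun _ e => e) = (b.sum fun _ e => e) ∧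
        ∃ i : Fin n, b i < a i ∧ ∀ j : Fin n, i < j → a j = b j))

end Paper

open Paper MvPolynomial

section Aux

variable {k : Type*} [Field k] {n : ℕ}

/-- The exponent vector of `tailProd`. -/
noncomputable def tvec (n r : ℕ) : Fin n →₀ ℕ :=
  ∑ i ∈ Finset.univ.filter (fun i : Fin n => r ≤ (i : ℕ)), Finsupp.single i 1

lemma tvec_apply (n r : ℕ) (j : Fin n) :
    tvec n r j = if r ≤ (j : ℕ) then 1 else 0 := by
  classical
  rw [tvec, Finsupp.finset_sum_apply]
  simp_rw [Finsupp.single_apply]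
  rw [Finset.sum_ite_eq' _ j fun _ => 1]
  simp [Finset.mem_filter]

lemma tailProd_eq (k : Type*) [Field k] (n r : ℕ) :
    tailProd k n r = monomial (tvec n r) (1 : k) := by
  classical
  rw [tailProd, tvec]
  induction (Finset.univ.filter (fun i : Fin n => r ≤ (i : ℕ))) using Finset.induction with
  | empty => simp
  | @insert _ _ hnot ih =>
    rw [Finset.prod_insert hnot, Finset.sum_insert hnot, ih, X, monomial_mul, one_mul]

lemma tailProd_pow (k : Type*) [Field k] (n r m : ℕ) :
    tailProd k n r ^ m = monomial (m • tvec n r) (1 : k) := by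
  rw [tailProd_eq, monomial_pow, one_pow]

lemma mem_Phi_iff {J : Ideal (MvPolynomial (Fin n) k)} {r : ℕ} {f : MvPolynomial (Fin n) k} :
    f ∈ Phi r J ↔ ∃ m : ℕ, tailProd k n r ^ m * f ∈ J := by
  have hmono : Monotone (fun m : ℕ =>
      Submodule.colon J ((Ideal.span {tailProd k n r} ^ m : Ideal (MvPolynomial (Fin n) k)) :
        Submodule (MvPolynomial (Fin n) k) (MvPolynomial (Fin n) k))) := by
    intro a b hab
    intro g hg
    rw [Submodule.mem_colon] at hg ⊢
    intro p hp
    exact hg p (Ideal.pow_le_pow_right hab hp)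
  rw [Phi, sat, Submodule.mem_iSup_of_directed _ hmono.directed_le]
  refine exists_congr fun m => ?_
  rw [Ideal.span_singleton_pow]
  exact Ideal.mem_colon_span_singleton.trans (by rw [mul_comm])

end Aux

/-- For a Borel-type monomial ideal `J` with minimal monomial
generators indexed by `G`, the saturation `Φ_r(J) = J : (x_{r+1}⋯x_n)^∞` is
generated by the monomials obtained from those generators by deleting all factors
`x_{r+1},…,x_n`. -/
theorem stmt4 {k : Type*} [Field k] {n : ℕ}
    (J : Ideal (MvPolynomial (Fin n) k)) (hB : BorelCond J)
    (r : ℕ) (hr1 : 1 ≤ r) (hrn : r ≤ n)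
    (G : Set (Fin n →₀ ℕ))
    (hGgen : J = Ideal.span ((fun d => (monomial d (1:k) : MvPolynomial (Fin n) k)) '' G))
    (hGmin : ∀ d ∈ G, IsMinGen J d) :
    Phi r J = Ideal.span
      ((fun d : Fin n →₀ ℕ =>
        (monomial (d.filter fun i : Fin n => (i : ℕ) < r) (1:k) :
          MvPolynomial (Fin n) k)) '' G) := by
  classical
  have himg : (fun d : Fin n →₀ ℕ =>
      (monomial (d.filter fun i : Fin n => (i : ℕ) < r) (1:k) :
        MvPolynomial (Fin n) k)) '' G
      = (fun s => monomial s (1:k)) ''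
        ((fun d : Fin n →₀ ℕ => d.filter fun i : Fin n => (i : ℕ) < r) '' G) := by
    rw [Set.image_image]
  apply le_antisymm
  · intro f hf
    obtain ⟨m, hm⟩ := mem_Phi_iff.mp hf
    rw [tailProd_pow, hGgen, mem_ideal_span_monomial_image] at hm
    rw [himg, mem_ideal_span_monomial_image]
    intro e he
    have he2 : m • tvec n r + e ∈ (monomial (m • tvec n r) (1:k) * f).support := by
      rw [MvPolynomial.mem_support_iff, coeff_monomial_mul, one_mul]
      exact MvPolynomial.mem_support_iff.mp he
    obtain ⟨d, hdG, hde⟩ := hm _ he2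
    refine ⟨_, Set.mem_image_of_mem _ hdG, fun i => ?_⟩
    rw [Finsupp.filter_apply]
    split_ifs with hi
    · have h1 : d i ≤ (m • tvec n r) i + e i := hde i
      rw [Finsupp.smul_apply, tvec_apply, if_neg (by omega), smul_zero, zero_add] at h1
      exact h1
    · exact Nat.zero_le _
  · rw [himg, Ideal.span_le]
    rintro _ ⟨_, ⟨d, hdG, rfl⟩, rfl⟩
    rw [SetLike.mem_coe, mem_Phi_iff]
    set m := d.sum fun _ e => e with hm
    have hdm : ∀ i : Fin n, d i ≤ m := by
      intro i
      by_cases hi : i ∈ d.support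
      · exact Finset.single_le_sum (fun j _ => Nat.zero_le _) hi
      · simp [Finsupp.notMem_support_iff.mp hi]
    refine ⟨m, ?_⟩
    rw [tailProd_pow, monomial_mul, one_mul, hGgen, mem_ideal_span_monomial_image]
    intro e he
    rw [support_monomial, if_neg one_ne_zero, Finset.mem_singleton] at he
    subst he
    refine ⟨d, hdG, fun i => ?_⟩
    rw [Finsupp.add_apply, Finsupp.smul_apply, tvec_apply, Finsupp.filter_apply]
    by_cases hi : (i : ℕ) < r
    · rw [if_neg (by omega), if_pos hi, smul_zero, zero_add]
    · rw [if_pos (by omega), if_neg hi, smul_eq_mul, mul_one, add_zero]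
      exact hdm i
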